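/- arXiv:2507.17715 — 2 statements merged into one kernel-verified Lean document; each statement's English description precedes it below -/
import Mathlib

section
/- Let A be an ortholattice, and topologize F(A) by taking the family {φ(a) : a ∈ A} as a basis of open sets. Then a subset U ⊆ F(A) is compact, open, and biorthogonally closed if and only if U = φ(a) for some a ∈ A. -/
/-- An orthocomplementation on a bounded lattice. -/
def IsOrtho {A : Type*} [Lattice A] [BoundedOrder A] (perp : A → A) : Prop :=
  (∀ a : A, a ⊓ perp a = ⊥) ∧ (∀ a : A, a ⊔ perp a = ⊤) ∧
  (∀ a b : A, a ≤ b → perp b ≤ perp a) ∧ (∀ a : A, perp (perp a) = a)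

/-- A quantifier on an ortholattice. -/
def IsQuantifier {A : Type*} [Lattice A] [BoundedOrder A] (perp E : A → A) : Prop :=
  (∀ a b : A, E (a ⊔ b) = E a ⊔ E b) ∧ E ⊥ = ⊥ ∧ (∀ a : A, E (E a) = E a) ∧
  (∀ a : A, a ≤ E a) ∧ (∀ a : A, E (perp (E a)) = perp (E a))

/-- A proper filter: nonempty, upward closed, closed under meets, not containing ⊥. -/
def IsPF {A : Type*} [Lattice A] [BoundedOrder A] (x : Set A) : Prop :=
  x.Nonempty ∧ (∀ a ∈ x, ∀ b : A, a ≤ b → b ∈ x) ∧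
  (∀ a ∈ x, ∀ b ∈ x, a ⊓ b ∈ x) ∧ (⊥ : A) ∉ x

/-- The set of proper filters of `A`. -/
abbrev PF (A : Type*) [Lattice A] [BoundedOrder A] : Type _ := {x : Set A // IsPF x}

/-- `phi a` is the set of proper filters containing `a`. -/
def phi {A : Type*} [Lattice A] [BoundedOrder A] (a : A) : Set (PF A) := {x | a ∈ x.1}

/-- Orthogonal of a set of proper filters: `x ⊥ y` iff some `a ∈ x` has `perp a ∈ y`. -/
def oPerp {A : Type*} [Lattice A] [BoundedOrder A] (perp : A → A) (U : Set (PF A)) :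
    Set (PF A) := {x | ∀ y ∈ U, ∃ a ∈ x.1, perp a ∈ y.1}

section Aux

variable {A : Type*} [Lattice A] [BoundedOrder A]

lemma top_mem_pf (x : PF A) : (⊤ : A) ∈ x.1 := by
  obtain ⟨c, hc⟩ := x.2.1
  exact x.2.2.1 c hc ⊤ le_top

lemma phi_inf (a b : A) : phi (a ⊓ b) = (phi a ∩ phi b : Set (PF A)) := by
  ext x
  constructor
  · intro h
    exact ⟨x.2.2.1 _ h a inf_le_left, x.2.2.1 _ h b inf_le_right⟩
  · rintro ⟨ha, hb⟩
    exact x.2.2.2.1 a ha b hb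

lemma principal_pf {a : A} (ha : a ≠ ⊥) : IsPF {b : A | a ≤ b} :=
  ⟨⟨a, le_refl a⟩, fun c hc b hb => le_trans hc hb,
   fun c hc b hb => le_inf hc hb, fun h => ha (le_antisymm h bot_le)⟩

variable {perp : A → A}

lemma perp_bot' (hA : IsOrtho perp) : perp (⊥ : A) = ⊤ := by
  have := hA.2.1 ⊥
  rwa [bot_sup_eq] at this

lemma oPerp_phi (hA : IsOrtho perp) (a : A) : oPerp perp (phi a) = phi (perp a) := by
  ext x
  constructor
  · intro h
    by_cases ha : a = ⊥
    · subst ha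
      show perp ⊥ ∈ x.1
      rw [perp_bot' hA]
      exact top_mem_pf x
    · obtain ⟨c, hc, hpc⟩ := h ⟨{b | a ≤ b}, principal_pf ha⟩ (le_refl a)
      have : c ≤ perp a := by
        have := hA.2.2.1 _ _ hpc
        rwa [hA.2.2.2 c] at this
      exact x.2.2.1 c hc _ this
  · intro h y hy
    refine ⟨perp a, h, ?_⟩
    rw [hA.2.2.2 a]
    exact hy

lemma oPerp_antitone {U V : Set (PF A)} (h : U ⊆ V) :
    oPerp perp V ⊆ oPerp perp U := fun x hx y hy => hx y (h hy)

lemma finset_inf_mem (x : PF A) {ι : Type*} (f : ι → A) (t : Finset ι)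
    (h : ∀ i ∈ t, f i ∈ x.1) : t.inf f ∈ x.1 := by
  classical
  induction t using Finset.induction_on with
  | empty => simpa using top_mem_pf x
  | insert _ _ hni ih =>
    rename_i i s
    rw [Finset.inf_insert]
    exact x.2.2.2.1 _ (h i (Finset.mem_insert_self i s)) _
      (ih fun j hj => h j (Finset.mem_insert_of_mem hj))

lemma phi_basis :
    @TopologicalSpace.IsTopologicalBasis (PF A)
      (TopologicalSpace.generateFrom (Set.range (phi : A → Set (PF A))))
      (Set.range (phi : A → Set (PF A))) := by
  letI : TopologicalSpace (PF A) :=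
    TopologicalSpace.generateFrom (Set.range (phi : A → Set (PF A)))
  refine ⟨?_, ?_, rfl⟩
  · rintro t₁ ⟨a, rfl⟩ t₂ ⟨b, rfl⟩ x hx
    exact ⟨phi (a ⊓ b), ⟨a ⊓ b, rfl⟩, by rw [phi_inf]; exact hx, by rw [phi_inf]⟩
  · refine Set.eq_univ_of_forall fun x => ?_
    exact ⟨phi ⊤, ⟨⊤, rfl⟩, top_mem_pf x⟩

lemma compact_phi (a : A) :
    @IsCompact (PF A)
      (TopologicalSpace.generateFrom (Set.range (phi : A → Set (PF A)))) (phi a) := by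
  letI : TopologicalSpace (PF A) :=
    TopologicalSpace.generateFrom (Set.range (phi : A → Set (PF A)))
  apply isCompact_of_finite_subcover
  intro ι Us hUs hcov
  rcases Set.eq_empty_or_nonempty (phi a : Set (PF A)) with he | ⟨x, hx⟩
  · exact ⟨∅, by simp [he]⟩
  · have ha : a ≠ ⊥ := fun h => x.2.2.2.2 (h ▸ hx)
    set p : PF A := ⟨{b | a ≤ b}, principal_pf ha⟩ with hp
    have hpa : p ∈ (phi a : Set (PF A)) := le_refl a
    obtain ⟨i, hi⟩ := Set.mem_iUnion.mp (hcov hpa)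
    obtain ⟨v, ⟨b, rfl⟩, hpv, hvU⟩ :=
      phi_basis.exists_subset_of_mem_open hi (hUs i)
    have hab : a ≤ b := hpv
    refine ⟨{i}, fun z hz => ?_⟩
    have : z ∈ phi b := z.2.2.1 a hz b hab
    simpa using hvU this

end Aux

theorem stmt11 {A : Type*} [Lattice A] [BoundedOrder A] (perp : A → A)
    (hA : IsOrtho perp) (U : Set (PF A)) :
    (@IsCompact (PF A) (TopologicalSpace.generateFrom (Set.range (phi : A → Set (PF A)))) U ∧
     @IsOpen (PF A) (TopologicalSpace.generateFrom (Set.range (phi : A → Set (PF A)))) U ∧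
     U = oPerp perp (oPerp perp U)) ↔ ∃ a : A, U = phi a := by
  letI : TopologicalSpace (PF A) :=
    TopologicalSpace.generateFrom (Set.range (phi : A → Set (PF A)))
  constructor
  · rintro ⟨hc, ho, hbi⟩
    -- cover U by basic opens contained in U
    set ι := {b : A // phi b ⊆ U} with hι
    have hUs : ∀ i : ι, IsOpen (phi i.1 : Set (PF A)) := fun i =>
      TopologicalSpace.GenerateOpen.basic _ ⟨i.1, rfl⟩
    have hcov : U ⊆ ⋃ i : ι, phi i.1 := by
      intro x hx
      obtain ⟨v, ⟨b, rfl⟩, hxv, hvU⟩ := phi_basis.exists_subset_of_mem_open hx ho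
      exact Set.mem_iUnion.mpr ⟨⟨b, hvU⟩, hxv⟩
    obtain ⟨t, ht⟩ := hc.elim_finite_subcover _ hUs hcov
    set m : A := t.inf (fun i => perp i.1) with hm
    refine ⟨perp m, ?_⟩
    have key : oPerp perp (⋃ i ∈ t, phi i.1) = phi m := by
      ext x
      constructor
      · intro h
        refine finset_inf_mem x _ t fun i hi => ?_
        have : x ∈ oPerp perp (phi i.1) := fun y hy =>
          h y (Set.mem_biUnion hi hy)
        rwa [oPerp_phi hA] at this
      · intro hx y hy
        obtain ⟨i, hi, hyi⟩ := Set.mem_iUnion₂.mp hy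
        refine ⟨m, hx, ?_⟩
        have h1 : m ≤ perp i.1 := Finset.inf_le hi
        have h2 : i.1 ≤ perp m := by
          have := hA.2.2.1 _ _ h1
          rwa [hA.2.2.2 i.1] at this
        exact y.2.2.1 _ hyi _ h2
    have key2 : oPerp perp (oPerp perp (⋃ i ∈ t, phi i.1)) = phi (perp m) := by
      rw [key, oPerp_phi hA]
    apply Set.Subset.antisymm
    · -- U = U^⊥⊥ ⊆ (⋃)^⊥⊥ = phi (perp m)
      rw [hbi, ← key2]
      exact oPerp_antitone (oPerp_antitone ht)
    · -- phi (perp m) = (⋃)^⊥⊥ ⊆ U^⊥⊥ = U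
      have hsub : (⋃ i ∈ t, phi i.1 : Set (PF A)) ⊆ U := by
        intro x hx
        obtain ⟨i, _, hxi⟩ := Set.mem_iUnion₂.mp hx
        exact i.2 hxi
      have h2 : oPerp perp (oPerp perp (⋃ i ∈ t, phi i.1)) ⊆ oPerp perp (oPerp perp U) :=
        oPerp_antitone (oPerp_antitone hsub)
      rw [key2] at h2
      exact h2.trans hbi.ge
  · rintro ⟨a, rfl⟩
    refine ⟨compact_phi a, TopologicalSpace.GenerateOpen.basic _ ⟨a, rfl⟩, ?_⟩
    rw [oPerp_phi hA, oPerp_phi hA, hA.2.2.2 a]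
end

section
/- Let A be a Boolean algebra with quantifiers E and E' satisfying E(E' a) = E'(E a) for all a ∈ A. Define relations S and S' on F(A) by x S y iff {E a : a ∈ x} = {E a : a ∈ y}, and x S' y iff {E' a : a ∈ x} = {E' a : a ∈ y}. Then S and S' commute: for all x, z ∈ F(A), there exists y ∈ F(A) with x S y and y S' z if and only if there exists w ∈ F(A) with x S' w and w S z. -/
/-- A quantifier on a Boolean algebra. -/
def IsQuantifierB {A : Type*} [BooleanAlgebra A] (E : A → A) : Prop :=
  (∀ a b : A, E (a ⊔ b) = E a ⊔ E b) ∧ E ⊥ = ⊥ ∧ (∀ a : A, E (E a) = E a) ∧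
  (∀ a : A, a ≤ E a) ∧ (∀ a : A, E (E a)ᶜ = (E a)ᶜ)

section Aux

variable {A : Type*} [BooleanAlgebra A] {E E' : A → A}

lemma quant_mono (hE : IsQuantifierB E) {a b : A} (h : a ≤ b) : E a ≤ E b := by
  have h1 := hE.1 a b
  rw [sup_eq_right.mpr h] at h1
  exact h1 ▸ le_sup_left

lemma quant_top (hE : IsQuantifierB E) : E ⊤ = ⊤ :=
  le_antisymm le_top (hE.2.2.2.1 ⊤)

lemma quant_inf (hE : IsQuantifierB E) (a b : A) : E (a ⊓ E b) = E a ⊓ E b := by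
  apply le_antisymm
  · exact le_inf (quant_mono hE inf_le_left)
      ((quant_mono hE inf_le_right).trans_eq (hE.2.2.1 b))
  · have ha : a = (a ⊓ E b) ⊔ (a ⊓ (E b)ᶜ) := by
      rw [← inf_sup_left, sup_compl_eq_top, inf_top_eq]
    have h1 : E a = E (a ⊓ E b) ⊔ E (a ⊓ (E b)ᶜ) := by
      conv_lhs => rw [ha]
      exact hE.1 _ _
    have h2 : E (a ⊓ (E b)ᶜ) ≤ (E b)ᶜ :=
      (quant_mono hE inf_le_right).trans_eq (hE.2.2.2.2 b)
    calc E a ⊓ E b ≤ (E (a ⊓ E b) ⊔ (E b)ᶜ) ⊓ E b := by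
          rw [h1]; exact inf_le_inf_right _ (sup_le_sup_left h2 _)
      _ = E (a ⊓ E b) ⊓ E b ⊔ ((E b)ᶜ ⊓ E b) := by rw [inf_sup_right]
      _ = E (a ⊓ E b) ⊓ E b := by rw [compl_inf_eq_bot, sup_bot_eq]
      _ ≤ E (a ⊓ E b) := inf_le_left

lemma quant_inf' (hE : IsQuantifierB E) (a b : A) : E (E a ⊓ b) = E a ⊓ E b := by
  rw [inf_comm, quant_inf hE, inf_comm]

/-- The image of a proper filter under a quantifier is the set of its fixed elements. -/
lemma quant_image (hE : IsQuantifierB E) {s : Set A} (hs : IsPF s) :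
    E '' s = {b | b ∈ s ∧ E b = b} := by
  ext c
  constructor
  · rintro ⟨a, ha, rfl⟩
    exact ⟨hs.2.1 a ha _ (hE.2.2.2.1 a), hE.2.2.1 a⟩
  · rintro ⟨hc, hfix⟩
    exact ⟨c, hc, hfix⟩

/-- One direction of the commutation of the relations. -/
lemma key_dir (hE : IsQuantifierB E) (hE' : IsQuantifierB E')
    (hcomm : ∀ a : A, E (E' a) = E' (E a)) (x z y : PF A)
    (h1 : E '' x.1 = E '' y.1) (h2 : E' '' y.1 = E' '' z.1) :
    ∃ w : PF A, E' '' x.1 = E' '' w.1 ∧ E '' w.1 = E '' z.1 := by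
  rw [quant_image hE x.2, quant_image hE y.2] at h1
  rw [quant_image hE' y.2, quant_image hE' z.2] at h2
  -- transfer facts
  have Tx : ∀ a ∈ x.1, E a ∈ y.1 := by
    intro a ha
    have : E a ∈ {b | b ∈ x.1 ∧ E b = b} := ⟨x.2.2.1 a ha _ (hE.2.2.2.1 a), hE.2.2.1 a⟩
    rw [h1] at this; exact this.1
  have Ty : ∀ b ∈ y.1, E b ∈ x.1 := by
    intro b hb
    have : E b ∈ {c | c ∈ y.1 ∧ E c = c} := ⟨y.2.2.1 b hb _ (hE.2.2.2.1 b), hE.2.2.1 b⟩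
    rw [← h1] at this; exact this.1
  have Ty' : ∀ b ∈ y.1, E' b ∈ z.1 := by
    intro b hb
    have : E' b ∈ {c | c ∈ y.1 ∧ E' c = c} := ⟨y.2.2.1 b hb _ (hE'.2.2.2.1 b), hE'.2.2.1 b⟩
    rw [h2] at this; exact this.1
  have Tz : ∀ b ∈ z.1, E' b ∈ y.1 := by
    intro b hb
    have : E' b ∈ {c | c ∈ z.1 ∧ E' c = c} := ⟨z.2.2.1 b hb _ (hE'.2.2.2.1 b), hE'.2.2.1 b⟩
    rw [← h2] at this; exact this.1
  -- key transfers x → z and z → x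
  have T1 : ∀ a ∈ x.1, E' a = a → E a ∈ z.1 := by
    intro a ha hfix
    have h3 : E' (E a) ∈ z.1 := Ty' _ (Tx a ha)
    rwa [← hcomm, hfix] at h3
  have T2 : ∀ b ∈ z.1, E b = b → E' b ∈ x.1 := by
    intro b hb hfix
    have h3 : E (E' b) ∈ x.1 := Ty _ (Tz b hb)
    rwa [hcomm, hfix] at h3
  -- top facts
  have htopx : (⊤ : A) ∈ x.1 := by
    obtain ⟨a, ha⟩ := x.2.1; exact x.2.2.1 a ha ⊤ le_top
  have htopz : (⊤ : A) ∈ z.1 := by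
    obtain ⟨a, ha⟩ := z.2.1; exact z.2.2.1 a ha ⊤ le_top
  -- the candidate filter
  set W : Set A := {c | ∃ a b : A, a ∈ x.1 ∧ E' a = a ∧ b ∈ z.1 ∧ E b = b ∧ a ⊓ b ≤ c} with hW
  have hWx : ∀ a ∈ x.1, E' a = a → a ∈ W := fun a ha hfix =>
    ⟨a, ⊤, ha, hfix, htopz, quant_top hE, inf_le_left⟩
  have hWz : ∀ b ∈ z.1, E b = b → b ∈ W := fun b hb hfix =>
    ⟨⊤, b, htopx, quant_top hE', hb, hfix, inf_le_right⟩
  have hWpf : IsPF W := by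
    refine ⟨⟨⊤, hWx ⊤ htopx (quant_top hE')⟩, ?_, ?_, ?_⟩
    · rintro c ⟨a, b, ha, hfa, hb, hfb, hle⟩ d hcd
      exact ⟨a, b, ha, hfa, hb, hfb, hle.trans hcd⟩
    · rintro c ⟨a1, b1, ha1, hfa1, hb1, hfb1, hle1⟩ d ⟨a2, b2, ha2, hfa2, hb2, hfb2, hle2⟩
      refine ⟨a1 ⊓ a2, b1 ⊓ b2, x.2.2.2.1 a1 ha1 a2 ha2, ?_, z.2.2.2.1 b1 hb1 b2 hb2, ?_, ?_⟩
      · conv_lhs => rw [← hfa2]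
        rw [quant_inf hE', hfa1, hfa2]
      · conv_lhs => rw [← hfb2]
        rw [quant_inf hE, hfb1, hfb2]
      · calc a1 ⊓ a2 ⊓ (b1 ⊓ b2) ≤ (a1 ⊓ b1) ⊓ (a2 ⊓ b2) := by
              rw [inf_inf_inf_comm]
        _ ≤ c ⊓ d := inf_le_inf hle1 hle2
    · rintro ⟨a, b, ha, hfa, hb, hfb, hle⟩
      have hab : a ⊓ b = ⊥ := le_bot_iff.mp hle
      have h4 : a ≤ bᶜ := le_compl_iff_disjoint_right.mpr (disjoint_iff.mpr hab)
      have h5 : E a ≤ bᶜ := by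
        have := quant_mono hE h4
        have h6 : E bᶜ = bᶜ := by conv_lhs => rw [← hfb]
                                  rw [hE.2.2.2.2 b, hfb]
        rwa [h6] at this
      have h7 : E a ⊓ b ∈ z.1 := z.2.2.2.1 _ (T1 a ha hfa) b hb
      have h8 : E a ⊓ b = ⊥ := by
        rw [← le_bot_iff]
        calc E a ⊓ b ≤ bᶜ ⊓ b := inf_le_inf_right b h5
          _ = ⊥ := compl_inf_eq_bot
      rw [h8] at h7
      exact z.2.2.2.2 h7
  refine ⟨⟨W, hWpf⟩, ?_, ?_⟩
  · rw [quant_image hE' x.2, quant_image hE' hWpf]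
    ext c
    constructor
    · rintro ⟨hc, hfix⟩
      exact ⟨hWx c hc hfix, hfix⟩
    · rintro ⟨⟨a, b, ha, hfa, hb, hfb, hle⟩, hfix⟩
      have h3 : E' (a ⊓ b) ≤ c := (quant_mono hE' hle).trans_eq hfix
      have h4 : E' (a ⊓ b) = a ⊓ E' b := by
        conv_lhs => rw [← hfa]
        rw [quant_inf' hE', hfa]
      have h5 : a ⊓ E' b ∈ x.1 := x.2.2.2.1 a ha _ (T2 b hb hfb)
      refine ⟨x.2.2.1 _ h5 c ?_, hfix⟩
      rwa [h4] at h3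
  · rw [quant_image hE hWpf, quant_image hE z.2]
    ext c
    constructor
    · rintro ⟨⟨a, b, ha, hfa, hb, hfb, hle⟩, hfix⟩
      have h3 : E (a ⊓ b) ≤ c := (quant_mono hE hle).trans_eq hfix
      have h4 : E (a ⊓ b) = E a ⊓ b := by
        conv_lhs => rw [← hfb]
        rw [quant_inf hE, hfb]
      have h5 : E a ⊓ b ∈ z.1 := z.2.2.2.1 _ (T1 a ha hfa) b hb
      refine ⟨z.2.2.1 _ h5 c ?_, hfix⟩
      rwa [h4] at h3
    · rintro ⟨hc, hfix⟩
      exact ⟨hWz c hc hfix, hfix⟩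

end Aux

theorem stmt14 {A : Type*} [BooleanAlgebra A] (E E' : A → A)
    (hE : IsQuantifierB E) (hE' : IsQuantifierB E')
    (hcomm : ∀ a : A, E (E' a) = E' (E a)) (x z : PF A) :
    (∃ y : PF A, E '' x.1 = E '' y.1 ∧ E' '' y.1 = E' '' z.1) ↔
      (∃ w : PF A, E' '' x.1 = E' '' w.1 ∧ E '' w.1 = E '' z.1) := by
  constructor
  · rintro ⟨y, h1, h2⟩
    exact key_dir hE hE' hcomm x z y h1 h2
  · rintro ⟨w, h1, h2⟩
    exact key_dir hE' hE (fun a => (hcomm a).symm) x z w h1 h2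
end
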